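/- For the scale-invariant local matrix S^C with parameter t ∈ (0,1), the fundamental eigenvalue equals λ(k,θ) = -[t(cos θ - cos kd) + i(t-1) sin kd] / [t(cos θ - cos kd) - i(t-1) sin kd]. -/

import Mathlib

set_option maxHeartbeats 2000000


open Matrix Complex

/-- for the scale-invariant local matrix `S^C` with parameter `t ∈ (0,1)`,
the fundamental eigenvalue equals
`λ(k,θ) = -[t(cos θ - cos kd) + i(t-1) sin kd] / [t(cos θ - cos kd) - i(t-1) sin kd]`. -/
theorem stmt6 (t : ℝ) (ht : t ∈ Set.Ioo (0:ℝ) 1) (d θ k : ℝ)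
    (S : Matrix (Fin 3) (Fin 3) ℂ)
    (hS : S = !![((1 - 2*t : ℝ) : ℂ), ((Real.sqrt (2*t*(1-t)) : ℝ) : ℂ), ((Real.sqrt (2*t*(1-t)) : ℝ) : ℂ);
                 ((Real.sqrt (2*t*(1-t)) : ℝ) : ℂ), ((t-1 : ℝ) : ℂ), ((t : ℝ) : ℂ);
                 ((Real.sqrt (2*t*(1-t)) : ℝ) : ℂ), ((t : ℝ) : ℂ), ((t-1 : ℝ) : ℂ)])
    (hden1 : (Complex.exp (2*(k:ℂ)*d*Complex.I) * (S 1 1 * S 2 2 - S 1 2 * S 2 1)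
        + Complex.exp ((k:ℂ)*d*Complex.I) * (S 1 2 * Complex.exp ((θ:ℂ)*Complex.I)
            + S 2 1 * Complex.exp (-(θ:ℂ)*Complex.I)) - 1) ≠ 0)
    (hden2 : ((t:ℂ) * (Real.cos θ - Real.cos (k*d)) - Complex.I * ((t:ℂ)-1) * Real.sin (k*d)) ≠ 0) :
    (Complex.exp (2*(k:ℂ)*d*Complex.I) * S.det
        + Complex.exp ((k:ℂ)*d*Complex.I) *
            ((S 0 0 * S 1 2 - S 0 2 * S 1 0) * Complex.exp ((θ:ℂ)*Complex.I)
             + (S 0 0 * S 2 1 - S 2 0 * S 0 1) * Complex.exp (-(θ:ℂ)*Complex.I))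
        - S 0 0) /
    (Complex.exp (2*(k:ℂ)*d*Complex.I) * (S 1 1 * S 2 2 - S 1 2 * S 2 1)
        + Complex.exp ((k:ℂ)*d*Complex.I) * (S 1 2 * Complex.exp ((θ:ℂ)*Complex.I)
            + S 2 1 * Complex.exp (-(θ:ℂ)*Complex.I)) - 1)
    = -(((t:ℂ) * (Real.cos θ - Real.cos (k*d)) + Complex.I * ((t:ℂ)-1) * Real.sin (k*d)) /
        ((t:ℂ) * (Real.cos θ - Real.cos (k*d)) - Complex.I * ((t:ℂ)-1) * Real.sin (k*d))) := by
  obtain ⟨ht0, ht1⟩ := ht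
  have hs : ((Real.sqrt (2*t*(1-t)) : ℝ) : ℂ) ^ 2 = 2*(t:ℂ)*(1-(t:ℂ)) := by
    rw [← Complex.ofReal_pow, Real.sq_sqrt (by nlinarith)]
    push_cast; ring
  subst hS
  set E := Complex.exp ((k:ℂ)*d*Complex.I) with hE
  set F := Complex.exp ((θ:ℂ)*Complex.I) with hF
  have hE0 : E ≠ 0 := Complex.exp_ne_zero _
  have hF0 : F ≠ 0 := Complex.exp_ne_zero _
  have hE2 : Complex.exp (2*(k:ℂ)*d*Complex.I) = E^2 := by
    rw [hE, ← Complex.exp_nat_mul]; norm_num; ring_nf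
  have hFinv : Complex.exp (-(θ:ℂ)*Complex.I) = F⁻¹ := by
    rw [hF, ← Complex.exp_neg]; ring_nf
  have hEinv : Complex.exp (-(↑(k*d):ℂ)*Complex.I) = E⁻¹ := by
    rw [hE, ← Complex.exp_neg]; push_cast; ring_nf
  have hcosθ : ((Real.cos θ : ℝ) : ℂ) = (F + F⁻¹)/2 := by
    rw [Complex.ofReal_cos, Complex.cos, hFinv]
  have hcoskd : ((Real.cos (k*d) : ℝ) : ℂ) = (E + E⁻¹)/2 := by
    rw [Complex.ofReal_cos, Complex.cos, hEinv]
    push_cast; ring_nf; rw [← hE]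
  have hsinkd : ((Real.sin (k*d) : ℝ) : ℂ) = (E⁻¹ - E) * Complex.I / 2 := by
    rw [Complex.ofReal_sin, Complex.sin, hEinv]
    push_cast; ring_nf; rw [← hE]; ring
  rw [Matrix.det_fin_three]
  simp only [Fin.isValue, Matrix.of_apply, Matrix.cons_val', Matrix.cons_val_two, Nat.succ_eq_add_one,
    Nat.reduceAdd, Matrix.tail_cons, Matrix.head_cons, Matrix.empty_val', Matrix.cons_val_fin_one,
    Matrix.cons_val_one, Matrix.cons_val_zero, Matrix.vecCons_const, Matrix.head_fin_const, Matrix.vecHead] at hden1 ⊢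
  rw [hE2, hFinv] at hden1
  rw [hE2, hFinv, hcosθ, hcoskd, hsinkd]
  rw [show -(((t:ℂ) * ((F + F⁻¹)/2 - (E + E⁻¹)/2) + Complex.I * ((t:ℂ)-1) * ((E⁻¹ - E) * Complex.I / 2)) /
        ((t:ℂ) * ((F + F⁻¹)/2 - (E + E⁻¹)/2) - Complex.I * ((t:ℂ)-1) * ((E⁻¹ - E) * Complex.I / 2)))
      = (-((t:ℂ) * ((F + F⁻¹)/2 - (E + E⁻¹)/2) + Complex.I * ((t:ℂ)-1) * ((E⁻¹ - E) * Complex.I / 2))) /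
        ((t:ℂ) * ((F + F⁻¹)/2 - (E + E⁻¹)/2) - Complex.I * ((t:ℂ)-1) * ((E⁻¹ - E) * Complex.I / 2))
      from (neg_div _ _).symm]
  rw [div_eq_div_iff hden1 (by rw [hcosθ, hcoskd, hsinkd] at hden2; exact hden2)]
  set s : ℂ := ((Real.sqrt (2*t*(1-t)) : ℝ) : ℂ) with hsdef
  set G : ℂ := E⁻¹ with hGdef
  set H : ℂ := F⁻¹ with hHdef
  have hG : E * G = 1 := by rw [hGdef]; field_simp
  have hH : F * H = 1 := by rw [hHdef]; field_simp
  have hI2 : Complex.I * ((t:ℂ)-1) * ((G - E) * Complex.I / 2) = ((t:ℂ)-1)*(E-G)/2 := by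
    linear_combination (((t:ℂ)-1)*(G-E)/2) * Complex.I_sq
  rw [hI2]
  push_cast
  simp only [Matrix.vecTail, Function.comp_apply]
  linear_combination
    ((-1/2 : ℂ)*E*H^2*(t:ℂ) + (1/2 : ℂ)*E*G*H - E*F*H*(t:ℂ) + (1/2 : ℂ)*E*F*G
      - (1/2 : ℂ)*E*F^2*(t:ℂ) - (1/2 : ℂ)*E^2*H + 2*E^2*H*(t:ℂ) - E^2*G
      - (1/2 : ℂ)*E^2*F + 2*E^2*F*(t:ℂ) + E^3 - 2*E^3*(t:ℂ)) * hs
    + (H*(t:ℂ) - H*(t:ℂ)^2 + F*(t:ℂ) - F*(t:ℂ)^2 - 2*E*(t:ℂ) + 2*E*(t:ℂ)^2) * hG
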